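/- Let C be a closed convex subset of a Hilbert space H, U : C → C nonexpansive with Fix(U) ≠ ∅, and λ ∈ (0, 1). Then the mapping U_λ = λ I + (1 − λ) U maps C into C, satisfies Fix(U_λ) = Fix(U), and is asymptotically regular: for each x ∈ C, ‖U_λ^{n+1} x − U_λ^n x‖ → 0 as n → ∞. -/

import Mathlib

open Filter
open scoped Topology

theorem averaged_nonexpansive_asymptotically_regular
    {H : Type*} [NormedAddCommGroup H] [InnerProductSpace ℝ H] [CompleteSpace H]
    (C : Set H) (hCc : IsClosed C) (hC : Convex ℝ C)
    (U : H → H) (hU : Set.MapsTo U C C)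
    (hne : ∀ x ∈ C, ∀ y ∈ C, ‖U x - U y‖ ≤ ‖x - y‖)
    (hfix : ∃ p ∈ C, U p = p)
    (lam : ℝ) (hl0 : 0 < lam) (hl1 : lam < 1)
    (Ul : H → H) (hUl : ∀ x, Ul x = lam • x + (1 - lam) • U x) :
    Set.MapsTo Ul C C ∧
      (∀ x ∈ C, (Ul x = x ↔ U x = x)) ∧
      (∀ x ∈ C, Tendsto (fun n => ‖Ul^[n + 1] x - Ul^[n] x‖) atTop (𝓝 0)) := by
  have hl1' : (0:ℝ) < 1 - lam := by linarith
  have hmaps : Set.MapsTo Ul C C := by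
    intro x hx
    rw [hUl]
    exact hC hx (hU hx) hl0.le hl1'.le (by ring)
  -- the key Hilbert-space identity for convex combinations
  have key : ∀ u v : H, ‖lam • u + (1 - lam) • v‖ ^ 2
      = lam * ‖u‖ ^ 2 + (1 - lam) * ‖v‖ ^ 2 - lam * (1 - lam) * ‖u - v‖ ^ 2 := by
    intro u v
    rw [← real_inner_self_eq_norm_sq, ← real_inner_self_eq_norm_sq u,
      ← real_inner_self_eq_norm_sq v, ← real_inner_self_eq_norm_sq (u - v)]
    simp only [inner_add_left, inner_add_right, inner_sub_left, inner_sub_right,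
      real_inner_smul_left, real_inner_smul_right, real_inner_comm v u]
    ring
  refine ⟨hmaps, ?_, ?_⟩
  · intro x hx
    constructor
    · intro h
      rw [hUl] at h
      have hx1 : lam • x + (1 - lam) • x = x := by rw [← add_smul]; simp
      have h2 : (1 - lam) • U x = (1 - lam) • x := add_left_cancel (h.trans hx1.symm)
      exact smul_right_injective H (ne_of_gt hl1') h2
    · intro h
      rw [hUl, h, ← add_smul]; simp
  · intro x hx
    obtain ⟨p, hpC, hp⟩ := hfix
    set xs : ℕ → H := fun n => Ul^[n] x with hxs
    have hxsC : ∀ n, xs n ∈ C := by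
      intro n
      induction n with
      | zero => exact hx
      | succ n ih =>
        have : xs (n + 1) = Ul (xs n) := by
          simp [hxs, Function.iterate_succ_apply']
        rw [this]; exact hmaps ih
    have hstep : ∀ n, xs (n + 1) = lam • xs n + (1 - lam) • U (xs n) := by
      intro n
      simp [hxs, Function.iterate_succ_apply', hUl]
    -- Fejér-type estimate
    have hdecr : ∀ n, ‖xs (n + 1) - p‖ ^ 2 + lam * (1 - lam) * ‖xs n - U (xs n)‖ ^ 2
        ≤ ‖xs n - p‖ ^ 2 := by
      intro n
      have hrw : xs (n + 1) - p = lam • (xs n - p) + (1 - lam) • (U (xs n) - p) := by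
        rw [hstep n]
        module
      rw [hrw, key]
      have hUle : ‖U (xs n) - p‖ ^ 2 ≤ ‖xs n - p‖ ^ 2 := by
        have := hne (xs n) (hxsC n) p hpC
        rw [hp] at this
        exact pow_le_pow_left₀ (norm_nonneg _) this 2
      have hsub : xs n - p - (U (xs n) - p) = xs n - U (xs n) := by abel
      rw [hsub]
      nlinarith
    -- sum the estimates
    have hsum : ∀ n, ∑ k ∈ Finset.range n, lam * (1 - lam) * ‖xs k - U (xs k)‖ ^ 2
        ≤ ‖x - p‖ ^ 2 := by
      intro n
      have htel : ∀ n, ∑ k ∈ Finset.range n, lam * (1 - lam) * ‖xs k - U (xs k)‖ ^ 2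
          + ‖xs n - p‖ ^ 2 ≤ ‖xs 0 - p‖ ^ 2 := by
        intro n
        induction n with
        | zero => simp
        | succ n ih =>
          rw [Finset.sum_range_succ]
          nlinarith [hdecr n]
      have h0 : xs 0 = x := by simp [hxs]
      have := htel n
      rw [h0] at this
      nlinarith [sq_nonneg ‖xs n - p‖]
    have hsummable : Summable (fun k => lam * (1 - lam) * ‖xs k - U (xs k)‖ ^ 2) := by
      apply summable_of_sum_range_le (fun k => by positivity) hsum
    have htends0 : Tendsto (fun k => lam * (1 - lam) * ‖xs k - U (xs k)‖ ^ 2) atTop (𝓝 0) :=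
      hsummable.tendsto_atTop_zero
    have hpos : (0:ℝ) < lam * (1 - lam) := by positivity
    have htends1 : Tendsto (fun k => ‖xs k - U (xs k)‖ ^ 2) atTop (𝓝 0) := by
      have h := htends0.const_mul (lam * (1 - lam))⁻¹
      have heq : (fun k => ‖xs k - U (xs k)‖ ^ 2)
          = fun k => (lam * (1 - lam))⁻¹ * (lam * (1 - lam) * ‖xs k - U (xs k)‖ ^ 2) := by
        funext k
        field_simp
      rw [heq]
      simpa using h
    have htends2 : Tendsto (fun k => ‖xs k - U (xs k)‖) atTop (𝓝 0) := by
      have : Tendsto (fun k => Real.sqrt (‖xs k - U (xs k)‖ ^ 2)) atTop (𝓝 (Real.sqrt 0)) :=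
        (Real.continuous_sqrt.tendsto 0).comp htends1
      simpa [Real.sqrt_sq (norm_nonneg _)] using this
    have hdiff : ∀ n, ‖Ul^[n + 1] x - Ul^[n] x‖ = (1 - lam) * ‖xs n - U (xs n)‖ := by
      intro n
      have : Ul^[n + 1] x - Ul^[n] x = (1 - lam) • (U (xs n) - xs n) := by
        have h1 : Ul^[n+1] x = xs (n+1) := rfl
        rw [h1, hstep n]
        have h2 : Ul^[n] x = xs n := rfl
        rw [h2, smul_sub]
        have : lam • xs n + (1 - lam) • xs n = xs n := by rw [← add_smul]; simp
        nth_rewrite 3 [← this]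
        abel
      rw [this, norm_smul, Real.norm_eq_abs, abs_of_pos hl1']
      congr 1
      rw [← norm_neg]
      congr 1
      abel
    simp only [hdiff]
    simpa using htends2.const_mul (1 - lam)
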